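/- If a weighted directed graph is weakly reversible with positive weights b on its edges, then the vector B = (B_1,...,B_m) of tree constants satisfies A(B)·B = 0 componentwise on each linkage class, i.e., the tree constants give a positive element of the kernel of the Kirchhoff matrix (the Matrix-Tree theorem for Laplacian kernels). -/

import Mathlib

/-- Undirected connectivity in a directed graph `E`. -/
def UndirConn {V : Type*} (E : V → V → Prop) : V → V → Prop :=
  Relation.ReflTransGen (fun a b => E a b ∨ E b a)

/-- A spanning `i`-tree on the vertex set `U ∋ i` of the directed graph `E`, given by its
finite edge set: an acyclic spanning subgraph of `U` with unique sink at `i`. -/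
def IsSpanningITreeOn {V : Type*} (E : V → V → Prop) (U : Set V) (i : V)
    (T : Finset (V × V)) : Prop :=
  (∀ e ∈ T, E e.1 e.2 ∧ e.1 ∈ U ∧ e.2 ∈ U) ∧
  (∀ a ∈ U, a ≠ i → ∃! b, (a, b) ∈ T) ∧
  (∀ b, (i, b) ∉ T) ∧
  (∀ a ∈ U, Relation.ReflTransGen (fun u v => (u, v) ∈ T) a i)

open scoped Classical in
/-- The tree constant `B_i`, summed over spanning `i`-trees of the vertex set `U` (the
linkage class of `i`). -/
noncomputable def treeConstantOn {V : Type*} [Fintype V] (E : V → V → Prop)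
    (b : V × V → ℝ) (U : Set V) (i : V) : ℝ :=
  ∑ T ∈ Finset.univ.filter (fun T : Finset (V × V) => IsSpanningITreeOn E U i T),
    ∏ e ∈ T, b e

/-- The Kirchhoff matrix: `[A(B)]_{ij} = b(j,i)` for `i ≠ j`, columns summing to zero. -/
def kirchhoff (m : ℕ) (b : Fin m × Fin m → ℝ) : Matrix (Fin m) (Fin m) ℝ :=
  Matrix.of fun i j => if i = j then -∑ l ∈ Finset.univ.erase i, b (i, l) else b (j, i)

open Relation Finset
open scoped Classical

namespace MTTAux

variable {V : Type*} [Fintype V] [DecidableEq V]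

/-- The edge relation of a finite edge set. -/
def rel (F : Finset (V × V)) : V → V → Prop := fun u v => (u, v) ∈ F

/-- A functional graph on `U` with target root `i` lying on a cycle, no self-loop at `i`. -/
def IsFuncGraph (E : V → V → Prop) (U : Set V) (i : V) (F : Finset (V × V)) : Prop :=
  (∀ e ∈ F, E e.1 e.2 ∧ e.1 ∈ U ∧ e.2 ∈ U) ∧
  (∀ a ∈ U, ∃! c, (a, c) ∈ F) ∧
  ((i, i) ∉ F) ∧
  (∀ a ∈ U, ReflTransGen (rel F) a i)

/-- Paths to `t` do not need any out-edge of `t`. -/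
lemma reach_erase {F : Finset (V × V)} {t c : V} {a : V}
    (h : ReflTransGen (rel F) a t) : ReflTransGen (rel (F.erase (t, c))) a t := by
  induction h using ReflTransGen.head_induction_on with
  | refl => exact .refl
  | @head x y h' _ ih =>
    by_cases hx : x = t
    · exact hx ▸ .refl
    · exact ih.head (Finset.mem_erase.2 ⟨by simp [hx], h'⟩)

/-- If the only successor of `a` is `a` itself, `a` reaches only itself. -/
lemma eq_of_reach_selfloop {T : Finset (V × V)} {a r : V}
    (huniq : ∀ c, (a, c) ∈ T → c = a) (h : ReflTransGen (rel T) a r) : r = a := by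
  induction h with
  | refl => rfl
  | tail _ step ih => exact huniq _ (ih ▸ step)

/-- Vertices reachable from a vertex of `U` stay in `U` (all edges have endpoints in `U`). -/
lemma mem_of_reach {F : Finset (V × V)} {U : Set V}
    (hF : ∀ e ∈ F, e.1 ∈ U ∧ e.2 ∈ U) {a x : V}
    (ha : a ∈ U) (h : ReflTransGen (rel F) a x) : x ∈ U := by
  induction h with
  | refl => exact ha
  | tail _ step _ => exact (hF _ step).2

/-- Existence of the cycle predecessor of `i` in a functional graph. -/
lemma pred_exists {E : V → V → Prop} {U : Set V} {i : V} {F : Finset (V × V)}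
    (hF : IsFuncGraph E U i F) (hiU : i ∈ U) :
    ∃ j, (j, i) ∈ F ∧ ReflTransGen (rel F) i j := by
  obtain ⟨hedge, huniq, hno, hreach⟩ := hF
  obtain ⟨c, hc, -⟩ := huniq i hiU
  have hcU : c ∈ U := (hedge _ hc).2.2
  rcases ReflTransGen.cases_tail (hreach c hcU) with h | ⟨j, hcj, hji⟩
  · exact absurd (h ▸ hc) hno
  · exact ⟨j, hji, ReflTransGen.head hc hcj⟩

/-- Uniqueness of the cycle predecessor of `i` in a functional graph. -/
lemma pred_unique {E : V → V → Prop} {U : Set V} {i : V} {F : Finset (V × V)}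
    (hF : IsFuncGraph E U i F) {j₁ j₂ : V}
    (h₁ : (j₁, i) ∈ F) (r₁ : ReflTransGen (rel F) i j₁)
    (h₂ : (j₂, i) ∈ F) (r₂ : ReflTransGen (rel F) i j₂) : j₁ = j₂ := by
  obtain ⟨hedge, huniq, hno, hreach⟩ := hF
  have hiU : i ∈ U := (hedge _ h₁).2.2
  set O : Finset V := univ.filter (fun x => ReflTransGen (rel F) i x) with hO
  have hUO : ∀ x ∈ O, x ∈ U := fun x hx =>
    mem_of_reach (fun e he => (hedge e he).2) hiU (mem_filter.1 hx).2
  let g : ∀ a ∈ O, V := fun a ha => (huniq a (hUO a ha)).exists.choose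
  have hg : ∀ a ha, (a, g a ha) ∈ F := fun a ha => (huniq a (hUO a ha)).exists.choose_spec
  have hgu : ∀ a ha c, (a, c) ∈ F → g a ha = c := fun a ha c hc =>
    ((huniq a (hUO a ha)).unique (hg a ha) hc)
  have hmaps : ∀ a ha, g a ha ∈ O := fun a ha =>
    mem_filter.2 ⟨mem_univ _, ((mem_filter.1 ha).2).tail (hg a ha)⟩
  have m1 : j₁ ∈ O := mem_filter.2 ⟨mem_univ _, r₁⟩
  have m2 : j₂ ∈ O := mem_filter.2 ⟨mem_univ _, r₂⟩
  have hsurj : ∀ x ∈ O, ∃ a ha, g a ha = x := by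
    intro x hx
    by_cases hxi : x = i
    · exact ⟨j₁, m1, (hgu _ m1 _ h₁).trans hxi.symm⟩
    · rcases ReflTransGen.cases_tail (mem_filter.1 hx).2 with h | ⟨y, hy, hyx⟩
      · exact absurd h hxi
      · have my : y ∈ O := mem_filter.2 ⟨mem_univ _, hy⟩
        exact ⟨y, my, hgu _ my _ hyx⟩
  exact Finset.inj_on_of_surj_on_of_card_le g hmaps hsurj le_rfl m1 m2
    (by rw [hgu _ m1 _ h₁, hgu _ m2 _ h₂])

/-- Reachability witnessed in at most `n` steps. -/
def reachN (E : V → V → Prop) (i : V) : ℕ → V → Prop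
  | 0, a => a = i
  | n + 1, a => a = i ∨ ∃ c, E a c ∧ reachN E i n c

lemma reachN_of_reach {E : V → V → Prop} {i a : V} (h : ReflTransGen E a i) :
    ∃ n, reachN E i n a := by
  induction h using ReflTransGen.head_induction_on with
  | refl => exact ⟨0, rfl⟩
  | @head x y h' _ ih =>
    obtain ⟨n, hn⟩ := ih
    exact ⟨n + 1, Or.inr ⟨y, h', hn⟩⟩

/-- Existence of a spanning `i`-tree when every vertex of `U` reaches `i`. -/
lemma exists_spanning_tree (E : V → V → Prop) (U : Set V) (i : V) (hiU : i ∈ U)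
    (hcl : ∀ u v, E u v → u ∈ U → v ∈ U) (hreach : ∀ a ∈ U, ReflTransGen E a i) :
    ∃ T, IsSpanningITreeOn E U i T := by
  have hex : ∀ a, a ∈ U → ∃ n, reachN E i n a := fun a ha => reachN_of_reach (hreach a ha)
  let d : V → ℕ := fun a => if h : ∃ n, reachN E i n a then Nat.find h else 0
  have key : ∀ a, a ∈ U → a ≠ i → ∃ c, E a c ∧ c ∈ U ∧ d c < d a := by
    intro a ha hai
    have h := hex a ha
    have hda : d a = Nat.find h := dif_pos h
    have hspec : reachN E i (Nat.find h) a := Nat.find_spec h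
    cases hn : Nat.find h with
    | zero => rw [hn] at hspec; exact absurd hspec hai
    | succ k =>
      rw [hn] at hspec
      rcases hspec with h' | ⟨c, hac, hc⟩
      · exact absurd h' hai
      · have hcU := hcl _ _ hac ha
        have hexc : ∃ n, reachN E i n c := ⟨k, hc⟩
        have hdc : d c ≤ k := by
          have : d c = Nat.find hexc := dif_pos hexc
          rw [this]; exact Nat.find_le hc
        exact ⟨c, hac, hcU, by omega⟩
  let nxt : V → V := fun a =>
    if h : a ∈ U ∧ a ≠ i then (key a h.1 h.2).choose else a
  have hnxt : ∀ a (h : a ∈ U ∧ a ≠ i), E a (nxt a) ∧ nxt a ∈ U ∧ d (nxt a) < d a := by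
    intro a h
    simp only [nxt, dif_pos h]
    exact (key a h.1 h.2).choose_spec
  refine ⟨(univ.filter (fun a => a ∈ U ∧ a ≠ i)).image (fun a => (a, nxt a)), ?_, ?_, ?_, ?_⟩
  · intro e he
    obtain ⟨a, ha, rfl⟩ := Finset.mem_image.1 he
    have h := (Finset.mem_filter.1 ha).2
    exact ⟨(hnxt a h).1, h.1, (hnxt a h).2.1⟩
  · intro a ha hai
    refine ⟨nxt a, Finset.mem_image.2 ⟨a, Finset.mem_filter.2 ⟨mem_univ _, ha, hai⟩, rfl⟩, ?_⟩
    intro c hc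
    obtain ⟨a', _, he⟩ := Finset.mem_image.1 hc
    obtain ⟨h1, h2⟩ := Prod.mk.injEq .. ▸ he
    exact h2 ▸ h1 ▸ rfl
  · intro c hc
    obtain ⟨a', ha', he⟩ := Finset.mem_image.1 hc
    have : a' = i := (Prod.mk.injEq .. ▸ he).1
    exact (Finset.mem_filter.1 ha').2.2 this
  · have H : ∀ n, ∀ a, a ∈ U → d a ≤ n →
        ReflTransGen (fun u v => (u, v) ∈ (univ.filter (fun a => a ∈ U ∧ a ≠ i)).image
          (fun a => (a, nxt a))) a i := by
      intro n
      induction n with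
      | zero =>
        intro a ha hd
        by_cases hai : a = i
        · exact hai ▸ .refl
        · exact absurd (lt_of_lt_of_le (hnxt a ⟨ha, hai⟩).2.2 hd) (Nat.not_lt_zero _)
      | succ n ih =>
        intro a ha hd
        by_cases hai : a = i
        · exact hai ▸ .refl
        · have h := hnxt a ⟨ha, hai⟩
          exact ReflTransGen.head
            (Finset.mem_image.2 ⟨a, Finset.mem_filter.2 ⟨mem_univ _, ha, hai⟩, rfl⟩)
            (ih (nxt a) h.2.1 (by omega))
    exact fun a ha => H (d a) a ha le_rfl

/-- The cycle predecessor of `i`, as a plain function. -/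
noncomputable def predOf (i : V) (F : Finset (V × V)) : V :=
  if h : ∃ j, (j, i) ∈ F ∧ ReflTransGen (rel F) i j then h.choose else i

lemma predOf_spec {E : V → V → Prop} {U : Set V} {i : V} {F : Finset (V × V)}
    (hF : IsFuncGraph E U i F) (hiU : i ∈ U) :
    (predOf i F, i) ∈ F ∧ ReflTransGen (rel F) i (predOf i F) := by
  have hex := pred_exists hF hiU
  simp only [predOf, dif_pos hex]
  exact hex.choose_spec

lemma predOf_eq {E : V → V → Prop} {U : Set V} {i : V} {F : Finset (V × V)}
    (hF : IsFuncGraph E U i F) {j : V} (hj : (j, i) ∈ F)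
    (hr : ReflTransGen (rel F) i j) : predOf i F = j := by
  have hex : ∃ j', (j', i) ∈ F ∧ ReflTransGen (rel F) i j' := ⟨j, hj, hr⟩
  simp only [predOf, dif_pos hex]
  exact pred_unique hF hex.choose_spec.1 hex.choose_spec.2 hj hr

end MTTAux

open MTTAux

section Main

variable {V : Type*} [Fintype V] [DecidableEq V]

/-- Bijection 1: pairs (out-edge of `i`, spanning `i`-tree) ↔ functional graphs. -/
lemma sum_out_eq (b : V × V → ℝ) (hb : ∀ e, 0 ≤ b e) (i : V) :
    ∑ l ∈ univ.erase i, b (i, l) *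
        treeConstantOn (fun u v => 0 < b (u, v)) b
          {v | UndirConn (fun u v => 0 < b (u, v)) v i} i
      = ∑ F ∈ univ.filter (fun F => IsFuncGraph (fun u v => 0 < b (u, v))
          {v | UndirConn (fun u v => 0 < b (u, v)) v i} i F), ∏ e ∈ F, b e := by
  classical
  set E : V → V → Prop := fun u v => 0 < b (u, v) with hE
  set U : Set V := {v | UndirConn E v i} with hU
  have hiU : i ∈ U := ReflTransGen.refl
  -- drop the zero terms
  rw [← Finset.sum_filter_of_ne (p := fun l => 0 < b (i, l))
    (fun x _ hx => by
      by_contra h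
      exact hx (by rw [le_antisymm (not_lt.1 h) (hb (i, x))]; ring))]
  rw [treeConstantOn]
  simp only [Finset.mul_sum]
  rw [Finset.sum_sigma' ((univ.erase i).filter (fun l => 0 < b (i, l)))
    (fun _ => univ.filter (fun T : Finset (V × V) => IsSpanningITreeOn E U i T))
    (fun l T => b (i, l) * ∏ e ∈ T, b e)]
  refine Finset.sum_bij' (fun p _ => insert (i, p.1) p.2)
    (fun F hF => ⟨((Finset.mem_filter.1 hF).2.2.1 i hiU).exists.choose,
      F.erase (i, ((Finset.mem_filter.1 hF).2.2.1 i hiU).exists.choose)⟩)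
    ?_ ?_ ?_ ?_ ?_
  · -- forward map lands in Funcs
    rintro ⟨l, T⟩ hp
    obtain ⟨hl, hT⟩ := Finset.mem_sigma.1 hp
    obtain ⟨hl', hbil⟩ := Finset.mem_filter.1 hl
    have hli : l ≠ i := (Finset.mem_erase.1 hl').1
    obtain ⟨hTe, hTu, hTi, hTr⟩ := (Finset.mem_filter.1 hT).2
    have hlU : l ∈ U := ReflTransGen.single (Or.inr hbil)
    refine Finset.mem_filter.2 ⟨mem_univ _, ?_, ?_, ?_, ?_⟩
    · intro e he
      rcases Finset.mem_insert.1 he with rfl | he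
      · exact ⟨hbil, hiU, hlU⟩
      · exact hTe e he
    · intro a ha
      by_cases hai : a = i
      · subst hai
        refine ⟨l, Finset.mem_insert_self _ _, ?_⟩
        intro c hc
        rcases Finset.mem_insert.1 hc with h | h
        · exact (Prod.mk.injEq .. ▸ h).2
        · exact absurd h (hTi c)
      · obtain ⟨c, hc, hcu⟩ := hTu a ha hai
        refine ⟨c, Finset.mem_insert_of_mem hc, ?_⟩
        intro c' hc'
        rcases Finset.mem_insert.1 hc' with h | h
        · exact absurd (Prod.mk.injEq .. ▸ h).1 hai
        · exact hcu c' h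
    · intro h
      rcases Finset.mem_insert.1 h with h | h
      · exact hli ((Prod.mk.injEq .. ▸ h).2).symm
      · exact hTi i h
    · intro a ha
      exact ReflTransGen.mono (fun u v h => Finset.mem_insert_of_mem h) _ _ (hTr a ha)
  · -- backward map lands in the sigma set
    intro F hF
    have hFf := (Finset.mem_filter.1 hF).2
    obtain ⟨hedge, huniq, hno, hreach⟩ := hFf
    set c₀ := (huniq i hiU).exists.choose with hc₀
    have hc : (i, c₀) ∈ F := (huniq i hiU).exists.choose_spec
    have hcu : ∀ c, (i, c) ∈ F → c = c₀ := fun c h => ((huniq i hiU).unique h hc)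
    refine Finset.mem_sigma.2 ⟨?_, ?_⟩
    · refine Finset.mem_filter.2 ⟨Finset.mem_erase.2 ⟨fun h => hno (h ▸ hc), mem_univ _⟩, ?_⟩
      exact (hedge _ hc).1
    · refine Finset.mem_filter.2 ⟨mem_univ _, ?_, ?_, ?_, ?_⟩
      · exact fun e he => hedge e (Finset.mem_of_mem_erase he)
      · intro a ha hai
        obtain ⟨c, hcF, hcuF⟩ := huniq a ha
        refine ⟨c, Finset.mem_erase.2 ⟨fun h => hai (Prod.mk.injEq .. ▸ h).1, hcF⟩, ?_⟩
        exact fun c' hc' => hcuF c' (Finset.mem_of_mem_erase hc')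
      · intro c h
        have h1 := Finset.mem_of_mem_erase h
        have h2 := hcu c h1
        exact (Finset.mem_erase.1 h).1 (by rw [h2])
      · exact fun a ha => reach_erase (hreach a ha)
  · -- left inverse
    rintro ⟨l, T⟩ hp
    obtain ⟨hl, hT⟩ := Finset.mem_sigma.1 hp
    obtain ⟨hTe, hTu, hTi, hTr⟩ := (Finset.mem_filter.1 hT).2
    have hnotmem : (i, l) ∉ T := hTi l
    have hmem : (i, l) ∈ insert (i, l) T := Finset.mem_insert_self _ _
    -- the chosen successor is `l`
    have hch : ∀ (h : ∃ c, (i, c) ∈ insert (i, l) T), h.choose = l := by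
      intro h
      rcases Finset.mem_insert.1 h.choose_spec with h' | h'
      · exact (Prod.mk.injEq .. ▸ h').2
      · exact absurd h' (hTi _)
    simp only [hch]
    congr 1
    exact Finset.erase_insert hnotmem
  · -- right inverse
    intro F hF
    have hFf := (Finset.mem_filter.1 hF).2
    exact Finset.insert_erase ((hFf.2.1 i hiU).exists.choose_spec)
  · -- weights
    rintro ⟨l, T⟩ hp
    obtain ⟨hl, hT⟩ := Finset.mem_sigma.1 hp
    have hnotmem : (i, l) ∉ T := ((Finset.mem_filter.1 hT).2).2.2.1 l
    rw [Finset.prod_insert hnotmem]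

/-- Inserting the edge `(j, i)` into a spanning `j`-tree gives a functional graph. -/
lemma insert_mem_funcs (b : V × V → ℝ) (i j : V) (T : Finset (V × V)) (hij : j ≠ i)
    (hbji : 0 < b (j, i))
    (hT : IsSpanningITreeOn (fun u v => 0 < b (u, v))
      {v | UndirConn (fun u v => 0 < b (u, v)) v i} j T) :
    IsFuncGraph (fun u v => 0 < b (u, v))
      {v | UndirConn (fun u v => 0 < b (u, v)) v i} i (insert (j, i) T) := by
  classical
  set E : V → V → Prop := fun u v => 0 < b (u, v) with hE
  set U : Set V := {v | UndirConn E v i} with hU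
  obtain ⟨hTe, hTu, hTj, hTr⟩ := hT
  have hiU : i ∈ U := ReflTransGen.refl
  have hjU : j ∈ U := ReflTransGen.single (Or.inl hbji)
  have hiiT : (i, i) ∉ T := by
    intro hmem
    have huniq' : ∀ c, (i, c) ∈ T → c = i := fun c hc =>
      (hTu i hiU (Ne.symm hij)).unique hc hmem
    exact hij (eq_of_reach_selfloop huniq' (hTr i hiU))
  refine ⟨?_, ?_, ?_, ?_⟩
  · intro e he
    rcases Finset.mem_insert.1 he with rfl | he
    · exact ⟨hbji, hjU, hiU⟩
    · exact hTe e he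
  · intro a ha
    by_cases haj : a = j
    · subst haj
      refine ⟨i, Finset.mem_insert_self _ _, ?_⟩
      intro c hc
      rcases Finset.mem_insert.1 hc with h | h
      · exact (Prod.mk.injEq .. ▸ h).2
      · exact absurd h (hTj c)
    · obtain ⟨c, hc, hcu⟩ := hTu a ha haj
      refine ⟨c, Finset.mem_insert_of_mem hc, ?_⟩
      intro c' hc'
      rcases Finset.mem_insert.1 hc' with h | h
      · exact absurd (Prod.mk.injEq .. ▸ h).1 haj
      · exact hcu c' h
  · intro h
    rcases Finset.mem_insert.1 h with h | h
    · exact hij ((Prod.mk.injEq .. ▸ h).1).symm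
    · exact hiiT h
  · intro a ha
    exact (ReflTransGen.mono (fun u v h => Finset.mem_insert_of_mem h) _ _ (hTr a ha)).tail
      (Finset.mem_insert_self _ _)

/-- Bijection 2: pairs (in-edge `(j,i)`, spanning `j`-tree) ↔ functional graphs. -/
lemma sum_in_eq (b : V × V → ℝ) (hb : ∀ e, 0 ≤ b e) (i : V) :
    ∑ j ∈ univ.erase i, b (j, i) *
        treeConstantOn (fun u v => 0 < b (u, v)) b
          {v | UndirConn (fun u v => 0 < b (u, v)) v i} j
      = ∑ F ∈ univ.filter (fun F => IsFuncGraph (fun u v => 0 < b (u, v))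
          {v | UndirConn (fun u v => 0 < b (u, v)) v i} i F), ∏ e ∈ F, b e := by
  classical
  set E : V → V → Prop := fun u v => 0 < b (u, v) with hE
  set U : Set V := {v | UndirConn E v i} with hU
  have hiU : i ∈ U := ReflTransGen.refl
  rw [← Finset.sum_filter_of_ne (p := fun j => 0 < b (j, i))
    (fun x _ hx => by
      by_contra h
      exact hx (by rw [le_antisymm (not_lt.1 h) (hb (x, i))]; ring))]
  simp only [treeConstantOn]
  simp only [Finset.mul_sum]
  rw [Finset.sum_sigma' ((univ.erase i).filter (fun j => 0 < b (j, i)))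
    (fun j => univ.filter (fun T : Finset (V × V) => IsSpanningITreeOn E U j T))
    (fun j T => b (j, i) * ∏ e ∈ T, b e)]
  refine Finset.sum_bij' (fun p _ => insert (p.1, i) p.2)
    (fun F _ => ⟨predOf i F, F.erase (predOf i F, i)⟩) ?_ ?_ ?_ ?_ ?_
  · rintro ⟨j, T⟩ hp
    obtain ⟨hj, hT⟩ := Finset.mem_sigma.1 hp
    obtain ⟨hj', hbji⟩ := Finset.mem_filter.1 hj
    exact Finset.mem_filter.2 ⟨mem_univ _,
      insert_mem_funcs b i j T (Finset.mem_erase.1 hj').1 hbji (Finset.mem_filter.1 hT).2⟩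
  · intro F hF
    have hFG := (Finset.mem_filter.1 hF).2
    obtain ⟨hpF, hpr⟩ := predOf_spec hFG hiU
    obtain ⟨hedge, huniq, hno, hreach⟩ := hFG
    have hpU : predOf i F ∈ U := (hedge _ hpF).2.1
    refine Finset.mem_sigma.2 ⟨?_, ?_⟩
    · dsimp only
      refine Finset.mem_filter.2 ⟨Finset.mem_erase.2 ⟨fun h => hno (by rw [h] at hpF; exact hpF), mem_univ _⟩, ?_⟩
      exact (hedge _ hpF).1
    · dsimp only
      refine Finset.mem_filter.2 ⟨mem_univ _, ?_, ?_, ?_, ?_⟩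
      · exact fun e he => hedge e (Finset.mem_of_mem_erase he)
      · intro a ha haj
        obtain ⟨c, hcF, hcuF⟩ := huniq a ha
        refine ⟨c, Finset.mem_erase.2 ⟨fun h => haj (Prod.mk.injEq .. ▸ h).1, hcF⟩, ?_⟩
        exact fun c' hc' => hcuF c' (Finset.mem_of_mem_erase hc')
      · intro c h
        have h1 := Finset.mem_of_mem_erase h
        have h2 : c = i := (huniq _ hpU).unique h1 hpF
        exact (Finset.mem_erase.1 h).1 (by rw [h2])
      · exact fun a ha => reach_erase ((hreach a ha).trans hpr)
  · rintro ⟨j, T⟩ hp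
    obtain ⟨hj, hT⟩ := Finset.mem_sigma.1 hp
    obtain ⟨hj', hbji⟩ := Finset.mem_filter.1 hj
    have hij : j ≠ i := (Finset.mem_erase.1 hj').1
    have hTt := (Finset.mem_filter.1 hT).2
    have hFG := insert_mem_funcs b i j T hij hbji hTt
    have hpe : predOf i (insert (j, i) T) = j :=
      predOf_eq hFG (Finset.mem_insert_self _ _)
        (ReflTransGen.mono (fun u v h => Finset.mem_insert_of_mem h) _ _ (hTt.2.2.2 i hiU))
    have hnotmem : (j, i) ∉ T := hTt.2.2.1 i
    dsimp only
    rw [hpe]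
    congr 1
    exact Finset.erase_insert hnotmem
  · intro F hF
    have hFG := (Finset.mem_filter.1 hF).2
    exact Finset.insert_erase (predOf_spec hFG hiU).1
  · rintro ⟨j, T⟩ hp
    obtain ⟨hj, hT⟩ := Finset.mem_sigma.1 hp
    have hnotmem : (j, i) ∉ T := ((Finset.mem_filter.1 hT).2).2.2.1 i
    rw [Finset.prod_insert hnotmem]

end Main

theorem matrix_tree_kernel (m : ℕ) (b : Fin m × Fin m → ℝ)
    (hb : ∀ e, 0 ≤ b e)
    (hwr : ∀ u v : Fin m,
      UndirConn (fun i j => 0 < b (i, j)) u v →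
      Relation.ReflTransGen (fun i j => 0 < b (i, j)) u v) :
    (kirchhoff m b).mulVec
        (fun i => treeConstantOn (fun i j => 0 < b (i, j)) b
          {v | UndirConn (fun i j => 0 < b (i, j)) v i} i) = 0 ∧
    (∀ i, 0 < treeConstantOn (fun i j => 0 < b (i, j)) b
        {v | UndirConn (fun i j => 0 < b (i, j)) v i} i) := by
  classical
  have hsymm : Symmetric (UndirConn (fun u v : Fin m => 0 < b (u, v))) :=
    haveI : Std.Symm (fun a c : Fin m => 0 < b (a, c) ∨ 0 < b (c, a)) := ⟨fun _ _ hh => Or.symm hh⟩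
    fun x y h => (Relation.ReflTransGen.stdSymm (r := fun a c : Fin m => 0 < b (a, c) ∨ 0 < b (c, a))).symm x y h
  constructor
  · funext i
    simp only [Matrix.mulVec, dotProduct, kirchhoff, Matrix.of_apply, Pi.zero_apply]
    rw [← Finset.add_sum_erase _ _ (Finset.mem_univ i), if_pos rfl]
    have h2 : ∑ j ∈ univ.erase i,
        (if i = j then -∑ l ∈ Finset.univ.erase i, b (i, l) else b (j, i)) *
          treeConstantOn (fun u v => 0 < b (u, v)) b
            {v | UndirConn (fun u v => 0 < b (u, v)) v j} j
        = ∑ j ∈ univ.erase i, b (j, i) *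
            treeConstantOn (fun u v => 0 < b (u, v)) b
              {v | UndirConn (fun u v => 0 < b (u, v)) v i} j := by
      refine Finset.sum_congr rfl (fun j hj => ?_)
      rw [if_neg (Ne.symm (Finset.mem_erase.1 hj).1)]
      by_cases hbj : 0 < b (j, i)
      · have hji : UndirConn (fun u v : Fin m => 0 < b (u, v)) j i :=
          ReflTransGen.single (Or.inl hbj)
        have hset : {v | UndirConn (fun u v : Fin m => 0 < b (u, v)) v j}
            = {v | UndirConn (fun u v : Fin m => 0 < b (u, v)) v i} := by
          ext v
          exact ⟨fun h => h.trans hji, fun h => h.trans (hsymm hji)⟩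
        rw [hset]
      · have hz : b (j, i) = 0 := le_antisymm (not_lt.1 hbj) (hb _)
        rw [hz]; ring
    rw [h2, sum_in_eq b hb i, ← sum_out_eq b hb i, neg_mul, Finset.sum_mul]
    exact neg_add_cancel _
  · intro i
    have hcl : ∀ u v : Fin m, 0 < b (u, v) →
        u ∈ {v | UndirConn (fun u v : Fin m => 0 < b (u, v)) v i} →
        v ∈ {v | UndirConn (fun u v : Fin m => 0 < b (u, v)) v i} :=
      fun u v huv hu => Relation.ReflTransGen.trans (ReflTransGen.single (Or.inr huv)) hu
    obtain ⟨T, hT⟩ := MTTAux.exists_spanning_tree (fun u v : Fin m => 0 < b (u, v))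
      {v | UndirConn (fun u v : Fin m => 0 < b (u, v)) v i} i ReflTransGen.refl hcl
      (fun a ha => hwr a i ha)
    rw [treeConstantOn]
    apply Finset.sum_pos
    · intro T' hT'
      apply Finset.prod_pos
      intro e he
      have h := (((Finset.mem_filter.1 hT').2).1 e he).1
      simpa using h
    · exact ⟨T, Finset.mem_filter.2 ⟨Finset.mem_univ _, hT⟩⟩
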